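/- Let C be a category with binary products. Every isomorphism in C satisfies (C2) if and only if the following condition holds: for any two morphisms f₁ : A₁ → B₁ and f₂ : A₂ → B₂ in C, if the product morphism f₁ × f₂ : A₁ × A₂ → B₁ × B₂ is an isomorphism, then f₁ and f₂ are isomorphisms. -/

import Mathlib

open CategoryTheory CategoryTheory.Limits

universe v u

variable {C : Type u} [Category.{v} C]

/-- `i₁ : X₁ ⟶ X` and `i₂ : X₂ ⟶ X` form a binary coproduct diagram. -/
def IsCoprodDiagram {X₁ X₂ X : C} (i₁ : X₁ ⟶ X) (i₂ : X₂ ⟶ X) : Prop :=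
  Nonempty (IsColimit (BinaryCofan.mk i₁ i₂))

/-- `p₁ : X ⟶ X₁` and `p₂ : X ⟶ X₂` form a binary product diagram. -/
def IsProdDiagram {X X₁ X₂ : C} (p₁ : X ⟶ X₁) (p₂ : X ⟶ X₂) : Prop :=
  Nonempty (IsLimit (BinaryFan.mk p₁ p₂))

/-- Condition (E1): pullbacks of `f` along both inclusions of any binary coproduct diagram
exist and the resulting legs form a binary coproduct diagram. -/
def SatE1 {A X : C} (f : A ⟶ X) : Prop :=
  ∀ {X₁ X₂ : C} (x₁ : X₁ ⟶ X) (x₂ : X₂ ⟶ X), IsCoprodDiagram x₁ x₂ →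
    ∃ (A₁ A₂ : C) (a₁ : A₁ ⟶ A) (a₂ : A₂ ⟶ A) (f₁ : A₁ ⟶ X₁) (f₂ : A₂ ⟶ X₂),
      IsPullback a₁ f₁ f x₁ ∧ IsPullback a₂ f₂ f x₂ ∧ IsCoprodDiagram a₁ a₂

/-- Condition (E2): in any commutative diagram over `f` whose rows are binary coproduct
diagrams, both squares are pullbacks. -/
def SatE2 {A X : C} (f : A ⟶ X) : Prop :=
  ∀ {A₁ A₂ X₁ X₂ : C} (a₁ : A₁ ⟶ A) (a₂ : A₂ ⟶ A) (x₁ : X₁ ⟶ X) (x₂ : X₂ ⟶ X)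
    (f₁ : A₁ ⟶ X₁) (f₂ : A₂ ⟶ X₂),
    a₁ ≫ f = f₁ ≫ x₁ → a₂ ≫ f = f₂ ≫ x₂ →
    IsCoprodDiagram x₁ x₂ → IsCoprodDiagram a₁ a₂ →
    IsPullback a₁ f₁ f x₁ ∧ IsPullback a₂ f₂ f x₂

/-- A morphism is extensive if it satisfies (E1) and (E2). -/
def Extensive {A X : C} (f : A ⟶ X) : Prop := SatE1 f ∧ SatE2 f

/-- Condition (C1): pushouts of `f` along both projections of any binary product diagram
exist and the resulting legs form a binary product diagram. -/
def SatC1 {A X : C} (f : A ⟶ X) : Prop :=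
  ∀ {A₁ A₂ : C} (p₁ : A ⟶ A₁) (p₂ : A ⟶ A₂), IsProdDiagram p₁ p₂ →
    ∃ (X₁ X₂ : C) (q₁ : X ⟶ X₁) (q₂ : X ⟶ X₂) (f₁ : A₁ ⟶ X₁) (f₂ : A₂ ⟶ X₂),
      IsPushout p₁ f f₁ q₁ ∧ IsPushout p₂ f f₂ q₂ ∧ IsProdDiagram q₁ q₂

/-- Condition (C2): in any commutative diagram over `f` whose rows are binary product
diagrams, both squares are pushouts. -/
def SatC2 {A X : C} (f : A ⟶ X) : Prop :=
  ∀ {A₁ A₂ X₁ X₂ : C} (p₁ : A ⟶ A₁) (p₂ : A ⟶ A₂) (q₁ : X ⟶ X₁) (q₂ : X ⟶ X₂)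
    (f₁ : A₁ ⟶ X₁) (f₂ : A₂ ⟶ X₂),
    p₁ ≫ f₁ = f ≫ q₁ → p₂ ≫ f₂ = f ≫ q₂ →
    IsProdDiagram p₁ p₂ → IsProdDiagram q₁ q₂ →
    IsPushout p₁ f f₁ q₁ ∧ IsPushout p₂ f f₂ q₂

/-- A morphism is coextensive if it satisfies (C1) and (C2). -/
def Coextensive {A X : C} (f : A ⟶ X) : Prop := SatC1 f ∧ SatC2 f

/-- A coproduct inclusion: a morphism admitting a complementary inclusion forming
a binary coproduct diagram. -/
def IsCoprodInclusion {A X : C} (ι : A ⟶ X) : Prop :=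
  ∃ (A' : C) (ι' : A' ⟶ X), IsCoprodDiagram ι ι'

/-- An extremal epimorphism: whenever `e = i ≫ m` with `m` a monomorphism, `m` is an
isomorphism. -/
def IsExtremalEpi {A B : C} (e : A ⟶ B) : Prop :=
  ∀ {I : C} (i : A ⟶ I) (m : I ⟶ B), Mono m → i ≫ m = e → IsIso m

/-- The binary strict refinement property for an object `X`. -/
def BinaryStrictRefinement (X : C) : Prop :=
  ∀ {A₁ A₂ B₁ B₂ : C} (a₁ : X ⟶ A₁) (a₂ : X ⟶ A₂) (b₁ : X ⟶ B₁) (b₂ : X ⟶ B₂),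
    IsProdDiagram a₁ a₂ → IsProdDiagram b₁ b₂ →
    ∃ (C₁₁ C₁₂ C₂₁ C₂₂ : C)
      (α₁₁ : A₁ ⟶ C₁₁) (α₁₂ : A₁ ⟶ C₁₂) (α₂₁ : A₂ ⟶ C₂₁) (α₂₂ : A₂ ⟶ C₂₂)
      (β₁₁ : B₁ ⟶ C₁₁) (β₁₂ : B₂ ⟶ C₁₂) (β₂₁ : B₁ ⟶ C₂₁) (β₂₂ : B₂ ⟶ C₂₂),
      a₁ ≫ α₁₁ = b₁ ≫ β₁₁ ∧ a₁ ≫ α₁₂ = b₂ ≫ β₁₂ ∧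
      a₂ ≫ α₂₁ = b₁ ≫ β₂₁ ∧ a₂ ≫ α₂₂ = b₂ ≫ β₂₂ ∧
      IsProdDiagram α₁₁ α₁₂ ∧ IsProdDiagram α₂₁ α₂₂ ∧
      IsProdDiagram β₁₁ β₂₁ ∧ IsProdDiagram β₁₂ β₂₂

/-- A jointly monomorphic pair which is a reflexive, symmetric and transitive relation. -/
def IsEquivalenceRelationPair {R X : C} (r₁ r₂ : R ⟶ X) : Prop :=
  (∀ {T : C} (a b : T ⟶ R), a ≫ r₁ = b ≫ r₁ → a ≫ r₂ = b ≫ r₂ → a = b) ∧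
  (∃ d : X ⟶ R, d ≫ r₁ = 𝟙 X ∧ d ≫ r₂ = 𝟙 X) ∧
  (∃ s : R ⟶ R, s ≫ r₁ = r₂ ∧ s ≫ r₂ = r₁) ∧
  (∀ {P : C} (p₁ p₂ : P ⟶ R), IsPullback p₁ p₂ r₂ r₁ →
    ∃ t : P ⟶ R, t ≫ r₁ = p₁ ≫ r₁ ∧ t ≫ r₂ = p₂ ≫ r₂)


section Aux

variable {C : Type u} [Category.{v} C]

/-- In a pushout square, the map opposite an isomorphism is an isomorphism. -/
lemma isIso_of_isPushout_of_isIso {A A₁ X X₁ : C} {p : A ⟶ A₁} {f : A ⟶ X}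
    {f₁ : A₁ ⟶ X₁} {q : X ⟶ X₁} [IsIso f] (h : IsPushout p f f₁ q) : IsIso f₁ := by
  refine ⟨h.desc (𝟙 A₁) (inv f ≫ p) (by simp), h.inl_desc _ _ _, ?_⟩
  apply h.hom_ext
  · rw [reassoc_of% (h.inl_desc (𝟙 A₁) (inv f ≫ p) (by simp))]
    simp
  · rw [reassoc_of% (h.inr_desc (𝟙 A₁) (inv f ≫ p) (by simp)), h.w,
      IsIso.inv_hom_id_assoc, Category.comp_id]

lemma isIso_prodLift_of_isLimit [HasBinaryProducts C] {A A₁ A₂ : C} {p₁ : A ⟶ A₁} {p₂ : A ⟶ A₂}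
    (hA : IsLimit (BinaryFan.mk p₁ p₂)) : IsIso (prod.lift p₁ p₂) := by
  have h1 : hA.lift (BinaryFan.mk prod.fst prod.snd) ≫ p₁ = prod.fst :=
    hA.fac _ ⟨WalkingPair.left⟩
  have h2 : hA.lift (BinaryFan.mk prod.fst prod.snd) ≫ p₂ = prod.snd :=
    hA.fac _ ⟨WalkingPair.right⟩
  refine ⟨hA.lift (BinaryFan.mk prod.fst prod.snd), ?_, ?_⟩
  · apply BinaryFan.IsLimit.hom_ext hA <;>
      simp [h1, h2]
    · exact prod.lift_fst _ _
    · exact prod.lift_snd _ _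
  · apply Limits.prod.hom_ext <;> simp [h1, h2]

end Aux

/-- Every isomorphism satisfies (C2) iff products of morphisms reflect isomorphisms. -/
theorem iso_satC2_iff_prod_map_reflects_iso [HasBinaryProducts C] :
    (∀ {A X : C} (f : A ⟶ X), IsIso f → SatC2 f) ↔
      (∀ {A₁ A₂ B₁ B₂ : C} (f₁ : A₁ ⟶ B₁) (f₂ : A₂ ⟶ B₂),
        IsIso (Limits.prod.map f₁ f₂) → IsIso f₁ ∧ IsIso f₂) := by
  constructor
  · intro H A₁ A₂ B₁ B₂ f₁ f₂ hiso
    have hp : IsProdDiagram (prod.fst : A₁ ⨯ A₂ ⟶ A₁) prod.snd := ⟨prodIsProd A₁ A₂⟩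
    have hq : IsProdDiagram (prod.fst : B₁ ⨯ B₂ ⟶ B₁) prod.snd := ⟨prodIsProd B₁ B₂⟩
    obtain ⟨h₁, h₂⟩ := H (Limits.prod.map f₁ f₂) hiso prod.fst prod.snd prod.fst prod.snd f₁ f₂
      (by simp) (by simp) hp hq
    exact ⟨isIso_of_isPushout_of_isIso h₁, isIso_of_isPushout_of_isIso h₂⟩
  · intro H A X f hf A₁ A₂ X₁ X₂ p₁ p₂ q₁ q₂ f₁ f₂ w₁ w₂ hp hq
    obtain ⟨hA⟩ := hp
    obtain ⟨hX⟩ := hq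
    have hiA : IsIso (prod.lift p₁ p₂) := isIso_prodLift_of_isLimit hA
    have hiX : IsIso (prod.lift q₁ q₂) := isIso_prodLift_of_isLimit hX
    have key : Limits.prod.map f₁ f₂ = inv (prod.lift p₁ p₂) ≫ f ≫ prod.lift q₁ q₂ := by
      rw [IsIso.eq_inv_comp]
      apply Limits.prod.hom_ext <;> simp [← w₁, ← w₂]
    have : IsIso (Limits.prod.map f₁ f₂) := by
      rw [key]; infer_instance
    obtain ⟨hf₁, hf₂⟩ := H f₁ f₂ this
    exact ⟨IsPushout.of_vert_isIso ⟨w₁⟩, IsPushout.of_vert_isIso ⟨w₂⟩⟩
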